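/- The ring of regular functions on the complement of an affine hyperplane arrangement is differentially simple: for k a field of characteristic 0, the algebra O_M = k[x₁,…,x_ℓ, α₁⁻¹,…,α_N⁻¹] (αᵢ nonzero linear polynomials) with derivations ∂/∂x₁,…,∂/∂x_ℓ has no nonzero proper differential ideals. -/

import Mathlib

open MvPolynomial

private lemma coeff_pderiv_aux {k : Type*} [CommRing k] {ℓ : ℕ} (i : Fin ℓ)
    (p : MvPolynomial (Fin ℓ) k) (m : Fin ℓ →₀ ℕ) :
    (MvPolynomial.pderiv i p).coeff m =
      (m i + 1 : ℕ) * p.coeff (m + Finsupp.single i 1) := by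
  induction p using MvPolynomial.induction_on' with
  | monomial s a =>
    rw [pderiv_monomial]
    rcases eq_or_ne s (m + Finsupp.single i 1) with rfl | hs
    · have hsub : m + Finsupp.single i 1 - Finsupp.single i 1 = m := by
        ext j; simp [Finsupp.single_apply]
      rw [hsub]
      simp [MvPolynomial.coeff_monomial, Finsupp.single_apply, mul_comm]
    · rcases Nat.eq_zero_or_pos (s i) with h0 | hpos
      · simp [h0, MvPolynomial.coeff_monomial, hs]
      · have : s - Finsupp.single i 1 ≠ m := by
          intro h
          apply hs
          ext j
          rcases eq_or_ne j i with rfl | hj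
          · have := congrArg (fun f => f j) h
            simp [Finsupp.single_apply] at this ⊢
            omega
          · have := congrArg (fun f => f j) h
            simp [Finsupp.single_apply, hj, Ne.symm hj] at this ⊢
            omega
        simp [MvPolynomial.coeff_monomial, this, hs]
  | add p q hp hq =>
    simp [hp, hq, mul_add]

private lemma totalDegree_pderiv_lt {k : Type*} [CommRing k] {ℓ : ℕ} (i : Fin ℓ)
    (p : MvPolynomial (Fin ℓ) k) (hp : p.totalDegree ≠ 0) :
    (MvPolynomial.pderiv i p).totalDegree < p.totalDegree := by
  rw [MvPolynomial.totalDegree]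
  apply Finset.sup_lt_iff (Nat.pos_of_ne_zero hp) |>.mpr
  intro m hm
  have hc : p.coeff (m + Finsupp.single i 1) ≠ 0 := by
    intro h
    rw [MvPolynomial.mem_support_iff, coeff_pderiv_aux, h, mul_zero] at hm
    exact hm rfl
  have hle : (m + Finsupp.single i 1).sum (fun _ e => e) ≤ p.totalDegree :=
    MvPolynomial.le_totalDegree (MvPolynomial.mem_support_iff.mpr hc)
  have : (m + Finsupp.single i 1).sum (fun _ e => e) = m.sum (fun _ e => e) + 1 := by
    rw [Finsupp.sum_add_index (by simp) (by simp), Finsupp.sum_single_index rfl]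
  omega

private lemma exists_pderiv_ne_zero {k : Type*} [Field k] [CharZero k] {ℓ : ℕ}
    (p : MvPolynomial (Fin ℓ) k) (hp : p.totalDegree ≠ 0) :
    ∃ i, MvPolynomial.pderiv i p ≠ 0 := by
  by_contra h
  push_neg at h
  apply hp
  rw [MvPolynomial.totalDegree_eq_zero_iff]
  intro m hm x
  by_contra hx
  have h1 : m x ≠ 0 := hx
  set m' := m - Finsupp.single x 1 with hm'
  have hmm : m' + Finsupp.single x 1 = m := by
    ext j
    rcases eq_or_ne j x with rfl | hj
    · simp [hm', Finsupp.single_apply]; omega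
    · simp [hm', Finsupp.single_apply, hj, Ne.symm hj]
  have := coeff_pderiv_aux x p m'
  rw [h x, hmm] at this
  simp only [MvPolynomial.coeff_zero] at this
  have hcm : p.coeff m ≠ 0 := MvPolynomial.mem_support_iff.mp hm
  have : ((m' x + 1 : ℕ) : k) = 0 ∨ p.coeff m = 0 := mul_eq_zero.mp this.symm
  rcases this with h' | h'
  · exact Nat.cast_ne_zero.mpr (Nat.succ_ne_zero _) h'
  · exact hcm h'

/-- The ring of regular functions on the complement of an affine hyperplane
arrangement is differentially simple: the localization of `k[x₁,…,x_ℓ]` at the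
multiplicative set generated by degree-one polynomials `α₁,…,α_N`, equipped
with the derivations extending the coordinate partial derivatives, has no
nonzero proper differential ideals. -/
theorem hyperplane_complement_differentially_simple {k : Type*} [Field k]
    [CharZero k] (ℓ N : ℕ) (α : Fin N → MvPolynomial (Fin ℓ) k)
    (hα : ∀ i, (α i).totalDegree = 1)
    (S : Submonoid (MvPolynomial (Fin ℓ) k))
    (hS : S = Submonoid.closure (Set.range α))
    (D : Fin ℓ → Derivation k (Localization S) (Localization S))
    (hD : ∀ i p, D i (algebraMap (MvPolynomial (Fin ℓ) k) (Localization S) p) =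
      algebraMap (MvPolynomial (Fin ℓ) k) (Localization S) (MvPolynomial.pderiv i p))
    (I : Ideal (Localization S)) (hI : ∀ i, ∀ x ∈ I, D i x ∈ I) :
    I = ⊥ ∨ I = ⊤ := by
  by_cases hbot : I = ⊥
  · exact Or.inl hbot
  right
  -- get a nonzero element of I
  obtain ⟨x, hxI, hx0⟩ := Submodule.exists_mem_ne_zero_of_ne_bot hbot
  -- clear denominators
  obtain ⟨⟨p, s⟩, (hmk : IsLocalization.mk' (Localization S) p s = x)⟩ :=
    IsLocalization.mk'_surjective S x
  have hps : algebraMap (MvPolynomial (Fin ℓ) k) (Localization S) p ∈ I := by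
    rw [← IsLocalization.mk'_spec (Localization S) p s, hmk]
    exact Ideal.mul_mem_right _ _ hxI
  have hp0 : p ≠ 0 := by
    rintro rfl
    apply hx0
    have hu := IsLocalization.map_units (Localization S) s
    rw [← hmk] at hx0 ⊢
    have := IsLocalization.mk'_spec (Localization S) (0 : MvPolynomial (Fin ℓ) k) s
    rw [map_zero] at this
    exact hu.mul_left_eq_zero.mp this
  clear hmk hx0 hxI
  -- induction on the total degree
  have key : ∀ n : ℕ, ∀ p : MvPolynomial (Fin ℓ) k, p.totalDegree ≤ n → p ≠ 0 →
      algebraMap (MvPolynomial (Fin ℓ) k) (Localization S) p ∈ I → I = ⊤ := by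
    intro n
    induction n with
    | zero =>
      intro p hdeg hp0 hpI
      have hdeg0 : p.totalDegree = 0 := Nat.le_zero.mp hdeg
      -- p is a nonzero constant, hence a unit
      have hC : p = MvPolynomial.C (p.coeff 0) := by
        ext m
        rcases eq_or_ne m 0 with rfl | hm
        · simp
        · rw [MvPolynomial.coeff_C, if_neg (Ne.symm hm)]
          by_contra hc
          obtain ⟨x, hx⟩ : ∃ x, m x ≠ 0 := by
            by_contra h
            push_neg at h
            exact hm (Finsupp.ext h)
          exact hx ((MvPolynomial.totalDegree_eq_zero_iff _ p).mp hdeg0 m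
            (MvPolynomial.mem_support_iff.mpr hc) x)
      have hc0 : p.coeff 0 ≠ 0 := fun h => hp0 (by rw [hC, h, map_zero])
      have hunit : IsUnit p := by
        rw [hC]
        exact (isUnit_iff_ne_zero.mpr hc0).map
          (MvPolynomial.C : k →+* MvPolynomial (Fin ℓ) k)
      exact I.eq_top_of_isUnit_mem hpI
        (hunit.map (algebraMap (MvPolynomial (Fin ℓ) k) (Localization S)))
    | succ n ih =>
      intro p hdeg hp0 hpI
      rcases eq_or_ne p.totalDegree 0 with h0 | h0
      · exact ih p (h0 ▸ Nat.zero_le n) hp0 hpI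
      obtain ⟨i, hi⟩ := exists_pderiv_ne_zero p h0
      have hlt := totalDegree_pderiv_lt i p h0
      have hmem : algebraMap (MvPolynomial (Fin ℓ) k) (Localization S)
          (MvPolynomial.pderiv i p) ∈ I := by
        rw [← hD i p]
        exact hI i _ hpI
      exact ih (MvPolynomial.pderiv i p) (by omega) hi hmem
  exact key p.totalDegree p le_rfl hp0 hps
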